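/- For every permutation w of {1,…,n} there exists π ∈ G_{r,n} with |π| = w such that fmaj(π) = maj(w) and col(π) ≡ maj(w) (mod r); consequently, for every ε ∈ {1,−1} and h ∈ {0,…,r−1}, χ_{ε,h}(π) = ε^{inv(w)} · ζ^{h·maj(w)}. -/

import Mathlib

open Finset

open scoped Classical

/-- `Flt x y` means `x <_F y` in the order on colored integers:
`(a,s) <_F (b,t)` iff `s > t`, or `s = t` and `a < b`. -/
def Flt (x y : ℕ × ℕ) : Prop := y.2 < x.2 ∨ (x.2 = y.2 ∧ x.1 < y.1)

instance (x y : ℕ × ℕ) : Decidable (Flt x y) := by unfold Flt; infer_instance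

/-- Inversion number of a list of naturals. -/
def invNum (l : List ℕ) : ℕ :=
  ∑ i ∈ Finset.range l.length, ∑ j ∈ Finset.range l.length,
    if i < j ∧ l.getD j 0 < l.getD i 0 then 1 else 0

/-- Sum of the colors of a colored word. -/
def colSum (l : List (ℕ × ℕ)) : ℕ := (l.map Prod.snd).sum

/-- The major index `maj_F` of a colored word: the sum of the
(1-indexed) positions `i` with `l_i >_F l_{i+1}`. -/
def majF (l : List (ℕ × ℕ)) : ℕ :=
  ∑ i ∈ Finset.range (l.length - 1),
    if Flt (l.getD (i + 1) (0, 0)) (l.getD i (0, 0)) then i + 1 else 0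

/-- The flag major index `fmaj = r·maj_F + col`. -/
def fmaj (r : ℕ) (l : List (ℕ × ℕ)) : ℕ := r * majF l + colSum l

/-- The list of absolute values of a colored word. -/
def absList (l : List (ℕ × ℕ)) : List ℕ := l.map Prod.fst

/-- The one-dimensional character value `χ_{ε,h}` of a colored word:
`ε^{inv(|W|)} · ζ^{h·col(W)}`. -/
noncomputable def chi (ε ζ : ℂ) (h : ℕ) (l : List (ℕ × ℕ)) : ℂ :=
  ε ^ invNum (absList l) * ζ ^ (h * colSum l)

/-- `[m]_x = 1 + x + ⋯ + x^{m-1}`. -/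
noncomputable def qnum (m : ℕ) (x : ℂ) : ℂ := ∑ i ∈ Finset.range m, x ^ i

/-- Colored permutations in `G_{r,n}`: a permutation of `Fin n` together with
a color in `Fin r` at each position. -/
abbrev GP (r n : ℕ) := Equiv.Perm (Fin n) × (Fin n → Fin r)

/-- The window notation of a colored permutation: the colored word whose `i`-th
entry is the value `π.1 i` (shifted to lie in `{1,…,n}`) with color `π.2 i`. -/
def window {r n : ℕ} (π : GP r n) : List (ℕ × ℕ) :=
  (List.finRange n).map fun i => ((π.1 i : ℕ) + 1, (π.2 i : ℕ))

/-- The major index of a list of naturals: the sum of the (1-indexed) positions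
`i` with `l_i > l_{i+1}`. -/
def majL (l : List ℕ) : ℕ :=
  ∑ i ∈ Finset.range (l.length - 1),
    if l.getD (i + 1) 0 < l.getD i 0 then i + 1 else 0

/-- The one-line notation of a permutation of `Fin n`, as a list of values in
`{1,…,n}`. -/
def permList {n : ℕ} (w : Equiv.Perm (Fin n)) : List ℕ :=
  (List.finRange n).map fun i => (w i : ℕ) + 1

/-- Telescoping sum lemma. -/
lemma tele_aux (f : ℕ → ℕ) : ∀ m : ℕ, (∀ i < m, f i = f (i+1) ∨ f i = f (i+1) + 1) →
    ((∑ i ∈ Finset.range m, if f i = f (i+1) + 1 then i+1 else 0) + m * f m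
      = ∑ i ∈ Finset.range m, f i) := by
  intro m
  induction m with
  | zero => simp
  | succ m ih =>
    intro h
    have h2 := ih (fun i hi => h i (by omega))
    rw [Finset.sum_range_succ, Finset.sum_range_succ]
    rcases h m (by omega) with h1 | h1
    · rw [if_neg (by omega)]
      rw [h1] at h2 ⊢
      have e1 : (m+1) * f (m+1) = m * f (m+1) + f (m+1) := by ring
      omega
    · rw [if_pos h1]
      rw [h1] at h2 ⊢
      have e1 : (m+1) * (f (m+1)+1) = m * (f (m+1)) + m + f (m+1) + 1 := by ring
      have e2 : m * (f (m+1)+1) = m * f (m+1) + m := by ring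
      have e3 : (m+1) * f (m+1) = m * f (m+1) + f (m+1) := by ring
      omega

lemma key_aux (r a : ℕ) (hr : 1 ≤ r) : ((a+1) % r ≤ a % r ↔ (a+1)/r = a/r + 1) := by
  have hlt : a % r < r := Nat.mod_lt _ hr
  have hdm : r * (a / r) + a % r = a := Nat.div_add_mod a r
  rcases Nat.lt_or_ge (a % r + 1) r with h | h
  · have ha : a + 1 = r * (a / r) + (a % r + 1) := by omega
    have h1 : (a+1) % r = a % r + 1 := by
      rw [ha, Nat.mul_add_mod, Nat.mod_eq_of_lt h]
    have h2 : (a+1) / r = a / r := by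
      rw [ha, Nat.mul_add_div (by omega), Nat.div_eq_of_lt h, Nat.add_zero]
    omega
  · have he : a % r + 1 = r := by omega
    have ha : a + 1 = r * (a / r + 1) + 0 := by rw [Nat.mul_add]; omega
    have h1 : (a+1) % r = 0 := by rw [ha, Nat.mul_add_mod, Nat.zero_mod]
    have h2 : (a+1) / r = a / r + 1 := by
      rw [ha, Nat.mul_add_div (by omega)]; simp
    omega

/-- Descent at (0-indexed) position `j` of a word. -/
def descP (L : List ℕ) (j : ℕ) : Prop := L.getD (j+1) 0 < L.getD j 0

instance (L : List ℕ) (j : ℕ) : Decidable (descP L j) := by unfold descP; infer_instance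

/-- Number of descents of `L` at positions `≥ i` (within `range (n-1)`). -/
def dfun (L : List ℕ) (n i : ℕ) : ℕ :=
  ∑ j ∈ Finset.Ico i (n-1), if descP L j then 1 else 0

lemma dfun_zero (L : List ℕ) (n i : ℕ) (hi : n - 1 ≤ i) : dfun L n i = 0 := by
  rw [dfun, Finset.Ico_eq_empty (by omega), Finset.sum_empty]

lemma dfun_step (L : List ℕ) (n i : ℕ) (hi : i < n - 1) :
    dfun L n i = dfun L n (i+1) + if descP L i then 1 else 0 := by
  rw [dfun, dfun, Finset.sum_eq_sum_Ico_succ_bot hi, Nat.add_comm]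

lemma dfun_expand (L : List ℕ) (n i : ℕ) :
    dfun L n i = ∑ j ∈ Finset.range (n-1),
      if i ≤ j then (if descP L j then 1 else 0) else 0 := by
  rw [dfun]
  have h1 : (∑ j ∈ Finset.range (n-1), if i ≤ j then (if descP L j then 1 else 0) else 0)
      = ∑ j ∈ Finset.range (n-1),
          if j ∈ Finset.Ico i (n-1) then (if descP L j then 1 else 0) else 0 :=
    Finset.sum_congr rfl fun j hj => if_congr (by
      rw [Finset.mem_range] at hj
      rw [Finset.mem_Ico]
      omega) rfl rfl
  rw [h1, Finset.sum_ite_mem, Finset.inter_eq_right.mpr]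
  intro x hx
  rw [Finset.mem_Ico] at hx
  rw [Finset.mem_range]
  omega

lemma majL_eq (L : List ℕ) (n : ℕ) (hL : L.length = n) :
    majL L = ∑ j ∈ Finset.range (n-1), if descP L j then j+1 else 0 := by
  rw [majL, hL]
  exact Finset.sum_congr rfl fun j _ => if_congr Iff.rfl rfl rfl

lemma dfun_sum (L : List ℕ) (n : ℕ) (hL : L.length = n) :
    ∑ i ∈ Finset.range n, dfun L n i = majL L := by
  rw [majL_eq L n hL]
  calc ∑ i ∈ Finset.range n, dfun L n i
      = ∑ i ∈ Finset.range n, ∑ j ∈ Finset.range (n-1),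
          if i ≤ j then (if descP L j then 1 else 0) else 0 :=
        Finset.sum_congr rfl fun i _ => dfun_expand L n i
    _ = ∑ j ∈ Finset.range (n-1), ∑ i ∈ Finset.range n,
          if i ≤ j then (if descP L j then 1 else 0) else 0 := Finset.sum_comm
    _ = ∑ j ∈ Finset.range (n-1), if descP L j then j+1 else 0 := by
        apply Finset.sum_congr rfl
        intro j hj
        rw [Finset.mem_range] at hj
        have hsub : Finset.range (j+1) ⊆ Finset.range n :=
          Finset.range_subset_range.mpr (by omega)
        rw [← Finset.sum_subset hsub (fun x _ hx => by
          rw [if_neg]; rw [Finset.mem_range] at hx; omega)]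
        have h2 : ∑ i ∈ Finset.range (j+1),
            (if i ≤ j then (if descP L j then 1 else 0) else 0)
            = ∑ _i ∈ Finset.range (j+1), (if descP L j then 1 else 0) :=
          Finset.sum_congr rfl fun i hi => by
            rw [if_pos]; rw [Finset.mem_range] at hi; omega
        rw [h2, Finset.sum_const, Finset.card_range, smul_eq_mul]
        by_cases hdj : descP L j
        · rw [if_pos hdj, if_pos hdj, Nat.mul_one]
        · rw [if_neg hdj, if_neg hdj, Nat.mul_zero]

lemma permList_length {n : ℕ} (w : Equiv.Perm (Fin n)) : (permList w).length = n := by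
  simp [permList]

lemma permList_getD {n : ℕ} (w : Equiv.Perm (Fin n)) (k : ℕ) (hk : k < n) :
    (permList w).getD k 0 = (w ⟨k, hk⟩ : ℕ) + 1 := by
  rw [permList, List.getD_eq_getElem _ _ (by simpa using hk)]
  simp

lemma window_length {r n : ℕ} (π : GP r n) : (window π).length = n := by
  simp [window]

lemma window_getD {r n : ℕ} (π : GP r n) (k : ℕ) (hk : k < n) :
    (window π).getD k (0,0) = ((π.1 ⟨k, hk⟩ : ℕ) + 1, (π.2 ⟨k, hk⟩ : ℕ)) := by
  rw [window, List.getD_eq_getElem _ _ (by simpa using hk)]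
  simp

lemma Fiff_aux (r n : ℕ) (hr : 1 ≤ r) (w : Equiv.Perm (Fin n)) (z : Fin n → Fin r)
    (hz : ∀ k : Fin n, (z k : ℕ) = dfun (permList w) n (k : ℕ) % r)
    (i : ℕ) (hi : i < n - 1) :
    (Flt ((window (w, z)).getD (i+1) (0,0)) ((window (w, z)).getD i (0,0)) ↔
      dfun (permList w) n i / r = dfun (permList w) n (i+1) / r + 1) := by
  rw [window_getD (w, z) (i+1) (by omega), window_getD (w, z) i (by omega)]
  have hdw : descP (permList w) i ↔
      ((w ⟨i+1, by omega⟩ : ℕ) + 1 < (w ⟨i, by omega⟩ : ℕ) + 1) := by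
    unfold descP
    rw [permList_getD w (i+1) (by omega), permList_getD w i (by omega)]
  have hs := dfun_step (permList w) n i hi
  unfold Flt
  simp only
  rw [hz ⟨i, by omega⟩, hz ⟨i+1, by omega⟩]
  simp only
  by_cases hdi : descP (permList w) i
  · rw [if_pos hdi] at hs
    have hw := hdw.mp hdi
    rw [hs]
    constructor
    · rintro (hlt | ⟨heq, _⟩)
      · exact (key_aux r (dfun (permList w) n (i+1)) hr).mp (le_of_lt hlt)
      · exact (key_aux r (dfun (permList w) n (i+1)) hr).mp (le_of_eq heq.symm)
    · intro hdiv
      have hle := (key_aux r (dfun (permList w) n (i+1)) hr).mpr hdiv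
      rcases lt_or_eq_of_le hle with h' | h'
      · exact Or.inl h'
      · exact Or.inr ⟨h'.symm, hw⟩
  · rw [if_neg hdi, Nat.add_zero] at hs
    have hw : ¬ ((w ⟨i+1, by omega⟩ : ℕ) + 1 < (w ⟨i, by omega⟩ : ℕ) + 1) :=
      fun hcon => hdi (hdw.mpr hcon)
    rw [hs]
    constructor
    · rintro (hlt | ⟨_, hcon⟩)
      · omega
      · exact absurd hcon hw
    · intro hcon; omega

lemma sum_range_pred (n : ℕ) (hn : 1 ≤ n) (f : ℕ → ℕ) (hf : f (n-1) = 0) :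
    ∑ i ∈ Finset.range n, f i = ∑ i ∈ Finset.range (n-1), f i := by
  obtain ⟨m, rfl⟩ : ∃ m, n = m+1 := ⟨n-1, by omega⟩
  rw [Finset.sum_range_succ]
  simp only [Nat.add_sub_cancel] at hf ⊢
  rw [hf, Nat.add_zero]


/-- each fiber `{π : |π| = w}` contains an element whose flag
major index is `maj(w)` and whose color sum is `≡ maj(w) (mod r)`; consequently
its character value is `ε^{inv(w)} ζ^{h·maj(w)}`. -/
theorem exists_min_fmaj_in_fiber (r n : ℕ) (ζ : ℂ)
    (hr : 1 ≤ r) (hn : 1 ≤ n) (hζ : IsPrimitiveRoot ζ r)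
    (w : Equiv.Perm (Fin n)) :
    ∃ π : GP r n, π.1 = w ∧ fmaj r (window π) = majL (permList w) ∧
      colSum (window π) ≡ majL (permList w) [MOD r] ∧
      ∀ ε : ℂ, (ε = 1 ∨ ε = -1) → ∀ h : ℕ, h < r →
        chi ε ζ h (window π) = ε ^ invNum (permList w) * ζ ^ (h * majL (permList w)) := by
  classical
  have hL : (permList w).length = n := permList_length w
  -- the chosen colored permutation
  let π : GP r n := (w, fun i => ⟨dfun (permList w) n i % r, Nat.mod_lt _ hr⟩)
  -- F-descents of the window correspond to jumps of `dfun / r`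
  have hFiff : ∀ i, i < n - 1 →
      (Flt ((window π).getD (i+1) (0,0)) ((window π).getD i (0,0)) ↔
        dfun (permList w) n i / r = dfun (permList w) n (i+1) / r + 1) := by
    intro i hi
    exact Fiff_aux r n hr w π.2 (fun k => rfl) i hi
  -- major index of the window
  have hmajF : majF (window π) = ∑ i ∈ Finset.range (n-1),
      if dfun (permList w) n i / r = dfun (permList w) n (i+1) / r + 1 then i+1 else 0 := by
    rw [majF, window_length]
    exact Finset.sum_congr rfl fun i hi =>
      if_congr (hFiff i (Finset.mem_range.mp hi)) rfl rfl
  have hstepdiv : ∀ i < n, dfun (permList w) n i / r = dfun (permList w) n (i+1) / r ∨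
      dfun (permList w) n i / r = dfun (permList w) n (i+1) / r + 1 := by
    intro i hi
    by_cases hi1 : i < n - 1
    · have hs := dfun_step (permList w) n i hi1
      by_cases hdi : descP (permList w) i
      · rw [if_pos hdi] at hs
        rw [hs, Nat.succ_div]
        split
        · right; rfl
        · left; omega
      · rw [if_neg hdi, Nat.add_zero] at hs
        rw [hs]; left; rfl
    · left
      rw [dfun_zero _ _ _ (by omega), dfun_zero _ _ _ (by omega)]
  have htele := tele_aux (fun i => dfun (permList w) n i / r) n hstepdiv
  have hmajF2 : majF (window π) = ∑ i ∈ Finset.range n, dfun (permList w) n i / r := by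
    rw [hmajF]
    have h1 : (∑ i ∈ Finset.range n,
        if dfun (permList w) n i / r = dfun (permList w) n (i+1) / r + 1 then i+1 else 0)
        = ∑ i ∈ Finset.range (n-1),
            if dfun (permList w) n i / r = dfun (permList w) n (i+1) / r + 1
            then i+1 else 0 := by
      apply sum_range_pred n hn
      rw [if_neg]
      rw [dfun_zero _ _ (n-1) (le_refl (n-1)), dfun_zero _ _ (n-1+1) (by omega)]
      simp
    rw [← h1, ← htele, dfun_zero _ _ n (by omega), Nat.zero_div, Nat.mul_zero, Nat.add_zero]
  -- color sum of the window
  have hcol : colSum (window π) = ∑ i ∈ Finset.range n, dfun (permList w) n i % r := by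
    rw [colSum, window, List.map_map,
      ← Fin.sum_univ_eq_sum_range (fun i => dfun (permList w) n i % r) n,
      Fin.sum_univ_def]
    rfl
  -- the flag major index equals the major index
  have hfmaj : fmaj r (window π) = majL (permList w) := by
    rw [fmaj, hmajF2, hcol, Finset.mul_sum, ← Finset.sum_add_distrib,
      ← dfun_sum (permList w) n hL]
    exact Finset.sum_congr rfl fun i _ => Nat.div_add_mod (dfun (permList w) n i) r
  have hmod : colSum (window π) ≡ majL (permList w) [MOD r] := by
    have h1 : majL (permList w) = r * majF (window π) + colSum (window π) := by
      rw [← hfmaj]; rfl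
    unfold Nat.ModEq
    rw [h1, Nat.mul_add_mod]
  refine ⟨π, rfl, hfmaj, hmod, ?_⟩
  intro ε _ h _
  have habs : absList (window π) = permList w := by
    rw [absList, window, permList, List.map_map]
    rfl
  have hpowmod : ∀ c : ℕ, ζ ^ c = ζ ^ (c % r) := by
    intro c
    conv_lhs => rw [← Nat.div_add_mod c r]
    rw [pow_add, pow_mul, hζ.pow_eq_one, one_pow, one_mul]
  rw [chi, habs]
  congr 1
  rw [hpowmod (h * colSum (window π)), hpowmod (h * majL (permList w))]
  congr 1
  exact Nat.ModEq.mul_left h hmod
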